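/- Let N ≥ 1 be an integer, m > 0 a real number, and μ_i ∈ [0, m] for each i ∈ {1,…,N}. Let c_{i,t} ≥ 0 be real numbers for i ∈ {1,…,N} and t in an integer interval {τ, τ+1, …, τ'} with τ ≤ τ', containing Δ = τ' − τ + 1 time points. Let V = Σ_{t=τ}^{τ'−1} max_{1≤i≤N} |c_{i,t+1} − c_{i,t}|, and suppose I* ∈ {1,…,N} satisfies Σ_{t=τ}^{τ'} μ_{I*}·c_{I*,t} = max_{1≤i≤N} Σ_{t=τ}^{τ'} μ_i·c_{i,t}. Then Σ_{t=τ}^{τ'} ( max_{1≤i≤N} μ_i·c_{i,t} − μ_{I*}·c_{I*,t} ) ≤ 2·Δ·m·V. -/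

import Mathlib

open Finset

lemma telescope_abs (f : ℕ → ℝ) (s t : ℕ) (h : s ≤ t) :
    |f t - f s| ≤ ∑ u ∈ Finset.Ico s t, |f (u + 1) - f u| := by
  induction t, h using Nat.le_induction with
  | base => simp
  | succ n hn ih =>
    rw [Finset.sum_Ico_succ_top hn]
    have : |f (n + 1) - f s| ≤ |f n - f s| + |f (n + 1) - f n| := by
      calc |f (n + 1) - f s| = |(f n - f s) + (f (n + 1) - f n)| := by ring_nf
        _ ≤ |f n - f s| + |f (n + 1) - f n| := abs_add_le _ _
    linarith

/-- Step 2 of the proof of Lemma 1: over a batch of `Δ = τ' − τ + 1` consecutive times,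
the cumulative gap between the nonstationary optimum `max_i μ_i c_{i,t}` and the best
single action `I*` of the batch is at most `2·Δ·m·V`. -/
theorem batch_gap_le_variation
    (N : ℕ) (hN : 1 ≤ N) (m : ℝ) (hm : 0 < m)
    (μ : ℕ → ℝ) (hμ : ∀ i < N, μ i ∈ Set.Icc (0 : ℝ) m)
    (τ τ' : ℕ) (hττ' : τ ≤ τ')
    (Δ : ℕ) (hΔ : Δ = τ' - τ + 1)
    (c : ℕ → ℕ → ℝ) (hc : ∀ i < N, ∀ t ∈ Finset.Icc τ τ', 0 ≤ c i t)
    (V : ℝ)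
    (hV : V = ∑ t ∈ Finset.Ico τ τ',
        (Finset.range N).sup' (by simp; omega) (fun i => |c i (t + 1) - c i t|))
    (I : ℕ) (hI : I < N)
    (hopt : ∑ t ∈ Finset.Icc τ τ', μ I * c I t
        = (Finset.range N).sup' (by simp; omega)
            (fun i => ∑ t ∈ Finset.Icc τ τ', μ i * c i t)) :
    ∑ t ∈ Finset.Icc τ τ',
        ((Finset.range N).sup' (by simp; omega) (fun i => μ i * c i t) - μ I * c I t)
      ≤ 2 * (Δ : ℝ) * m * V := by
  have hne : (Finset.range N).Nonempty := ⟨0, Finset.mem_range.mpr (by omega)⟩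
  set S := Finset.Icc τ τ' with hS
  -- |c i t - c i s| ≤ V for s, t in the batch
  have mono : ∀ i < N, ∀ s t : ℕ, τ ≤ s → s ≤ t → t ≤ τ' → |c i t - c i s| ≤ V := by
    intro i hi s t hs hst ht
    calc |c i t - c i s| ≤ ∑ u ∈ Finset.Ico s t, |c i (u + 1) - c i u| :=
          telescope_abs _ _ _ hst
      _ ≤ ∑ u ∈ Finset.Ico s t,
            (Finset.range N).sup' hne (fun j => |c j (u + 1) - c j u|) :=
          Finset.sum_le_sum (fun u _ => Finset.le_sup' (fun j => |c j (u + 1) - c j u|) (Finset.mem_range.mpr hi))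
      _ ≤ ∑ u ∈ Finset.Ico τ τ',
            (Finset.range N).sup' hne (fun j => |c j (u + 1) - c j u|) := by
          apply Finset.sum_le_sum_of_subset_of_nonneg (Finset.Ico_subset_Ico hs ht)
          intro u _ _
          exact le_trans (abs_nonneg (c 0 (u + 1) - c 0 u))
            (Finset.le_sup' (fun j => |c j (u + 1) - c j u|)
              (Finset.mem_range.mpr (show 0 < N by omega)))
      _ = V := hV.symm
  have key : ∀ i < N, ∀ s ∈ S, ∀ t ∈ S, |c i t - c i s| ≤ V := by
    intro i hi s hs t ht
    rw [hS, Finset.mem_Icc] at hs ht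
    rcases le_total s t with h | h
    · exact mono i hi s t hs.1 h ht.2
    · rw [abs_sub_comm]; exact mono i hi t s ht.1 h hs.2
  -- μ i * c i t ≤ μ i * c i s + m * V
  have hμb : ∀ i < N, ∀ s ∈ S, ∀ t ∈ S, μ i * c i t ≤ μ i * c i s + m * V := by
    intro i hi s hs t ht
    have h2 : μ i * (c i t - c i s) ≤ m * V := by
      calc μ i * (c i t - c i s) ≤ |μ i * (c i t - c i s)| := le_abs_self _
        _ = |μ i| * |c i t - c i s| := abs_mul _ _
        _ ≤ m * V := by
            apply mul_le_mul _ (key i hi s hs t ht) (abs_nonneg _) hm.le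
            rw [abs_of_nonneg (hμ i hi).1]; exact (hμ i hi).2
    nlinarith
  set g : ℕ → ℝ := fun t => (Finset.range N).sup' hne (fun i => μ i * c i t) with hg
  have hτS : τ ∈ S := by rw [hS, Finset.mem_Icc]; omega
  -- step 1: g t ≤ g τ + m V
  have step1 : ∀ t ∈ S, g t ≤ g τ + m * V := by
    intro t ht
    obtain ⟨j, hj, hgt⟩ := Finset.exists_mem_eq_sup' hne (fun i => μ i * c i t)
    rw [Finset.mem_range] at hj
    calc g t = μ j * c j t := hgt
      _ ≤ μ j * c j τ + m * V := hμb j hj τ hτS t ht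
      _ ≤ g τ + m * V := by
          have := Finset.le_sup' (fun i => μ i * c i τ) (Finset.mem_range.mpr hj)
          linarith [this]
  -- step 2: card • g τ ≤ ∑ μ I c I + card • m V
  obtain ⟨j, hj, hgτ⟩ := Finset.exists_mem_eq_sup' hne (fun i => μ i * c i τ)
  rw [Finset.mem_range] at hj
  have hjI : ∑ s ∈ S, μ j * c j s ≤ ∑ s ∈ S, μ I * c I s := by
    rw [hopt]
    exact Finset.le_sup' (fun i => ∑ t ∈ S, μ i * c i t) (Finset.mem_range.mpr hj)
  have hcard : (S.card : ℝ) = (Δ : ℝ) := by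
    rw [hS, Nat.card_Icc]
    norm_cast; omega
  have step2 : (Δ : ℝ) * g τ ≤ (∑ s ∈ S, μ I * c I s) + (Δ : ℝ) * (m * V) := by
    have h1 : ∀ s ∈ S, g τ ≤ μ j * c j s + m * V := by
      intro s hs
      calc g τ = μ j * c j τ := hgτ
        _ ≤ μ j * c j s + m * V := hμb j hj s hs τ hτS
    have h2 : ∑ s ∈ S, g τ ≤ ∑ s ∈ S, (μ j * c j s + m * V) := Finset.sum_le_sum h1
    rw [Finset.sum_const, Finset.sum_add_distrib, Finset.sum_const, nsmul_eq_mul,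
      nsmul_eq_mul, hcard] at h2
    linarith
  -- combine
  have h3 : ∑ t ∈ S, g t ≤ (Δ : ℝ) * (g τ + m * V) := by
    have := Finset.sum_le_sum step1
    rwa [Finset.sum_const, nsmul_eq_mul, hcard] at this
  have hsplit : ∑ t ∈ S, (g t - μ I * c I t) = (∑ t ∈ S, g t) - ∑ t ∈ S, μ I * c I t :=
    Finset.sum_sub_distrib _ _
  calc ∑ t ∈ S, (g t - μ I * c I t)
      = (∑ t ∈ S, g t) - ∑ t ∈ S, μ I * c I t := hsplit
    _ ≤ 2 * (Δ : ℝ) * m * V := by nlinarith [step2, h3]
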